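/- Let A = ℤ[x₁₁, x₁₂, x₂₁, x₂₂], let D = x₁₁x₂₂ - x₁₂x₂₁, and let R be the localization of A away from D. Let β : R → R[t₁, t₁⁻¹, t₂, t₂⁻¹, u] be the ℤ-algebra homomorphism induced by the substitution x₁₁ ↦ t₁x₁₁ + u x₂₁, x₁₂ ↦ t₁x₁₂ + u x₂₂, x₂₁ ↦ t₂x₂₁, x₂₂ ↦ t₂x₂₂ (i.e. replacing the matrix X by bX with b = [[t₁,u],[0,t₂]]). If p, q are integers with p > q, then the only f ∈ R satisfying β(f) = t₁^p t₂^q f is f = 0. -/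

import Mathlib

open MvPolynomial

noncomputable section

set_option maxHeartbeats 1000000
set_option synthInstance.maxHeartbeats 200000

/-- `A = ℤ[x₁₁,x₁₂,x₂₁,x₂₂]`, with the variable `(i,j)` standing for `x_{i+1,j+1}`. -/
abbrev A : Type := MvPolynomial (Fin 2 × Fin 2) ℤ

/-- The coordinate `x_{i+1,j+1}`. -/
def Xv (i j : Fin 2) : A := X (i, j)

/-- The determinant `D = x₁₁x₂₂ - x₁₂x₂₁`. -/
def Dpoly : A := Xv 0 0 * Xv 1 1 - Xv 0 1 * Xv 1 0

/-- `R = A[1/D]`, the affine algebra of `GL₂/ℤ`. -/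
abbrev R : Type := Localization.Away Dpoly

/-- `S = R[t₁,t₁⁻¹,t₂,t₂⁻¹,u]`, realized as `R[t₁,t₂,u]` localized away from `t₁t₂`;
here `t₁ = X 0`, `t₂ = X 1`, `u = X 2`. -/
abbrev S : Type := Localization.Away ((X 0 * X 1 : MvPolynomial (Fin 3) R))

/-- The image of the coordinate `x_{i+1,j+1}` in `S`. -/
def xS (i j : Fin 2) : S := algebraMap R S (algebraMap A R (Xv i j))

/-- The element `t₁` of `S`. -/
def t1 : S := algebraMap (MvPolynomial (Fin 3) R) S (X 0)

/-- The element `t₂` of `S`. -/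
def t2 : S := algebraMap (MvPolynomial (Fin 3) R) S (X 1)

/-- The element `u` of `S`. -/
def uS : S := algebraMap (MvPolynomial (Fin 3) R) S (X 2)

/-- The substitution `X ↦ bX` with `b = [[t₁,u],[0,t₂]]` on the level of coordinates:
`x₁₁ ↦ t₁x₁₁ + u x₂₁`, `x₁₂ ↦ t₁x₁₂ + u x₂₂`, `x₂₁ ↦ t₂x₂₁`, `x₂₂ ↦ t₂x₂₂`. -/
def substVal (v : Fin 2 × Fin 2) : S :=
  if v = (0, 0) then t1 * xS 0 0 + uS * xS 1 0
  else if v = (0, 1) then t1 * xS 0 1 + uS * xS 1 1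
  else if v = (1, 0) then t2 * xS 1 0
  else t2 * xS 1 1


-- nonvanishing facts
lemma hD0 : Dpoly ≠ 0 := by
  intro h
  have := congrArg (eval (fun v => if v = (0,0) then 1 else if v = (1,1) then 1 else 0 : Fin 2 × Fin 2 → ℤ)) h
  simp [Dpoly, Xv] at this

instance : IsDomain R :=
  IsLocalization.isDomain_localization (powers_le_nonZeroDivisors_of_noZeroDivisors hD0)

-- base rings
abbrev P3 : Type := MvPolynomial (Fin 3) ℤ
def w3 : P3 := X 0 * X 1
lemma hw3 : w3 ≠ 0 := mul_ne_zero (X_ne_zero _) (X_ne_zero _)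
abbrev Qb : Type := Localization.Away w3
instance : IsDomain Qb :=
  IsLocalization.isDomain_localization (powers_le_nonZeroDivisors_of_noZeroDivisors hw3)
abbrev PQ : Type := Polynomial Qb
abbrev TL : Type := Localization.Away (Polynomial.X : PQ)
instance : IsDomain TL :=
  IsLocalization.isDomain_localization (powers_le_nonZeroDivisors_of_noZeroDivisors Polynomial.X_ne_zero)

def t1Q : Qb := algebraMap P3 Qb (X 0)
def t2Q : Qb := algebraMap P3 Qb (X 1)
def uQ : Qb := algebraMap P3 Qb (X 2)

lemma ht1t2 : IsUnit (t1Q * t2Q) := by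
  rw [t1Q, t2Q, ← map_mul]
  exact IsLocalization.Away.algebraMap_isUnit w3

lemma hUt1 : IsUnit t1Q := isUnit_of_mul_isUnit_left ht1t2
lemma hUt2 : IsUnit t2Q := isUnit_of_mul_isUnit_right ht1t2

-- iT and its injectivity
def iT : PQ →+* TL := algebraMap PQ TL
lemma iT_inj : Function.Injective iT :=
  IsLocalization.injective (M := Submonoid.powers (Polynomial.X : PQ)) TL (powers_le_nonZeroDivisors_of_noZeroDivisors Polynomial.X_ne_zero)

def ZU : TLˣ := (IsLocalization.Away.algebraMap_isUnit (S := TL) (Polynomial.X : PQ)).unit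
lemma ZU_val : (ZU : TL) = iT Polynomial.X := rfl

def jQ : Qb →+* TL := iT.comp Polynomial.C
def U1 : TLˣ := (hUt1.map jQ).unit
def U2 : TLˣ := (hUt2.map jQ).unit
lemma U1_val : (U1 : TL) = jQ t1Q := rfl
lemma U2_val : (U2 : TL) = jQ t2Q := rfl

-- the evaluation at the generic matrix [[t1+uz, u],[t2 z, t2]]
def EAval : Fin 2 × Fin 2 → PQ := fun v =>
  if v = (0,0) then Polynomial.C t1Q + Polynomial.C uQ * Polynomial.X
  else if v = (0,1) then Polynomial.C uQ
  else if v = (1,0) then Polynomial.C t2Q * Polynomial.X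
  else Polynomial.C t2Q

def EA : A →+* PQ := (aeval EAval).toRingHom

lemma EAval00 : EAval (0,0) = Polynomial.C t1Q + Polynomial.C uQ * Polynomial.X := rfl
lemma EAval01 : EAval (0,1) = Polynomial.C uQ := rfl
lemma EAval10 : EAval (1,0) = Polynomial.C t2Q * Polynomial.X := rfl
lemma EAval11 : EAval (1,1) = Polynomial.C t2Q := rfl

lemma hEAD : EA Dpoly = Polynomial.C (t1Q * t2Q) := by
  simp only [EA, Dpoly, AlgHom.toRingHom_eq_coe, RingHom.coe_coe, map_sub, map_mul,
    aeval_X, Xv]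
  rw [EAval00, EAval01, EAval10, EAval11]
  ring

lemma hEADU : IsUnit (EA Dpoly) := by
  rw [hEAD]; exact Polynomial.isUnit_C.mpr ht1t2

def E : R →+* PQ := Localization.awayLift EA Dpoly hEADU

lemma E_alg (a : A) : E (algebraMap A R a) = EA a := IsLocalization.Away.lift_eq _ hEADU a

-- evaluation of R at the matrix [[0,-1],[1,z⁻¹]]
def cAval : Fin 2 × Fin 2 → TL := fun v =>
  if v = (0,0) then 0
  else if v = (0,1) then -1
  else if v = (1,0) then 1
  else ((ZU⁻¹ : TLˣ) : TL)

def cA : A →+* TL := (aeval cAval).toRingHom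

lemma hcAD : cA Dpoly = 1 := by
  simp [cA, Dpoly, Xv, cAval]

lemma hcADU : IsUnit (cA Dpoly) := by rw [hcAD]; exact isUnit_one
def cR : R →+* TL := Localization.awayLift cA Dpoly hcADU

lemma cR_alg (a : A) : cR (algebraMap A R a) = cA a := IsLocalization.Away.lift_eq _ hcADU a

-- the map ν from S
def νval : Fin 3 → TL := ![(U1 : TL) * ((ZU⁻¹ : TLˣ) : TL), (U2 : TL) * (ZU : TL),
  (U1 : TL) + jQ uQ * (ZU : TL)]

def νP : MvPolynomial (Fin 3) R →+* TL := eval₂Hom cR νval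

lemma hνPU : IsUnit (νP ((X 0 * X 1 : MvPolynomial (Fin 3) R))) := by
  have : νP (X 0 * X 1) = ((U1 * ZU⁻¹ * (U2 * ZU) : TLˣ) : TL) := by
    simp [νP, νval]
  rw [this]; exact Units.isUnit _
def ν : S →+* TL := Localization.awayLift νP _ hνPU

lemma ν_algP (g : MvPolynomial (Fin 3) R) : ν (algebraMap _ S g) = νP g :=
  IsLocalization.Away.lift_eq _ hνPU g

lemma ν_alg (r : R) : ν (algebraMap R S r) = cR r := by
  rw [IsScalarTower.algebraMap_apply R (MvPolynomial (Fin 3) R) S r, ν_algP,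
    MvPolynomial.algebraMap_eq, νP, eval₂Hom_C]

lemma ν_xS (i j : Fin 2) : ν (xS i j) = cA (Xv i j) := by rw [xS, ν_alg, cR_alg]
lemma ν_t1 : ν t1 = (U1 : TL) * ((ZU⁻¹ : TLˣ) : TL) := by
  rw [t1, ν_algP]; simp [νP, νval]
lemma ν_t2 : ν t2 = (U2 : TL) * (ZU : TL) := by
  rw [t2, ν_algP]; simp [νP, νval]
lemma ν_uS : ν uS = (U1 : TL) + jQ uQ * (ZU : TL) := by
  rw [uS, ν_algP]; simp [νP, νval]

lemma cA_Xv00 : cA (Xv 0 0) = 0 := by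
  simp only [cA, AlgHom.toRingHom_eq_coe, RingHom.coe_coe, Xv, aeval_X]; rfl
lemma cA_Xv01 : cA (Xv 0 1) = -1 := by
  simp only [cA, AlgHom.toRingHom_eq_coe, RingHom.coe_coe, Xv, aeval_X]; rfl
lemma cA_Xv10 : cA (Xv 1 0) = 1 := by
  simp only [cA, AlgHom.toRingHom_eq_coe, RingHom.coe_coe, Xv, aeval_X]; rfl
lemma cA_Xv11 : cA (Xv 1 1) = ((ZU⁻¹ : TLˣ) : TL) := by
  simp only [cA, AlgHom.toRingHom_eq_coe, RingHom.coe_coe, Xv, aeval_X]; rfl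

lemma key1 (a : A) : ν ((aeval substVal) a) = iT (EA a) := by
  have : ν.comp (aeval substVal).toRingHom = iT.comp EA := by
    apply MvPolynomial.ringHom_ext
    · intro r
      exact RingHom.congr_fun (RingHom.ext_int
        ((ν.comp (aeval substVal).toRingHom).comp (C : ℤ →+* A))
        ((iT.comp EA).comp (C : ℤ →+* A))) r
    · rintro ⟨i, j⟩
      fin_cases i <;> fin_cases j <;>
        simp only [RingHom.coe_comp, Function.comp_apply, AlgHom.toRingHom_eq_coe,
          RingHom.coe_coe, aeval_X, EA]
      · show ν (substVal (0,0)) = iT (EAval (0,0))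
        rw [show substVal (0,0) = t1 * xS 0 0 + uS * xS 1 0 from rfl, EAval00]
        rw [map_add, map_mul, map_mul, ν_t1, ν_uS, ν_xS, ν_xS, cA_Xv00, cA_Xv10,
          map_add, map_mul]
        show _ = iT (Polynomial.C t1Q) + iT (Polynomial.C uQ) * iT Polynomial.X
        rw [show iT (Polynomial.C t1Q) = (U1 : TL) from rfl,
          show iT (Polynomial.C uQ) = jQ uQ from rfl, ← ZU_val]
        ring
      · show ν (substVal (0,1)) = iT (EAval (0,1))
        rw [show substVal (0,1) = t1 * xS 0 1 + uS * xS 1 1 from rfl, EAval01]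
        rw [map_add, map_mul, map_mul, ν_t1, ν_uS, ν_xS, ν_xS, cA_Xv01, cA_Xv11]
        show _ = jQ uQ
        linear_combination (jQ uQ) * ZU.mul_inv
      · show ν (substVal (1,0)) = iT (EAval (1,0))
        rw [show substVal (1,0) = t2 * xS 1 0 from rfl, EAval10]
        rw [map_mul, ν_t2, ν_xS, cA_Xv10, map_mul]
        rw [show iT (Polynomial.C t2Q) = (U2 : TL) from rfl, ← ZU_val]
        ring
      · show ν (substVal (1,1)) = iT (EAval (1,1))
        rw [show substVal (1,1) = t2 * xS 1 1 from rfl, EAval11]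
        rw [map_mul, ν_t2, ν_xS, cA_Xv11]
        show _ = (U2 : TL)
        linear_combination (U2 : TL) * ZU.mul_inv
  exact RingHom.congr_fun this a

lemma key_comp (β : R →+* S) (hβ : ∀ a : A, β (algebraMap A R a) = aeval substVal a) :
    ν.comp β = iT.comp E := by
  apply IsLocalization.ringHom_ext (Submonoid.powers Dpoly)
  refine RingHom.ext fun a => ?_
  show ν (β (algebraMap A R a)) = iT (E (algebraMap A R a))
  rw [hβ a, key1 a, E_alg]

lemma vcases' :  ∀ v : Fin 2 × Fin 2, v = ((0 : Fin 2), (0 : Fin 2)) ∨ v = ((0 : Fin 2), (1 : Fin 2)) ∨ v = ((1 : Fin 2), (0 : Fin 2)) ∨ v = ((1 : Fin 2), (1 : Fin 2)) := by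
  decide

lemma vcases (v : Fin 2 × Fin 2) :
    v = ((0 : Fin 2), (0 : Fin 2)) ∨ v = ((0 : Fin 2), (1 : Fin 2)) ∨
    v = ((1 : Fin 2), (0 : Fin 2)) ∨ v = ((1 : Fin 2), (1 : Fin 2)) := vcases' v

lemma cA_X (v : Fin 2 × Fin 2) : cA (X v) = cAval v := by simp [cA]
lemma EA_X (v : Fin 2 × Fin 2) : EA (X v) = EAval v := by simp [EA]

-- representation of cA a with bounded degree
lemma cA_rep (a : A) : ∃ (b : PQ) (m : ℕ), b.natDegree ≤ m ∧ iT b = cA a * (ZU : TL) ^ m := by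
  induction a using MvPolynomial.induction_on with
  | C r =>
    refine ⟨Polynomial.C ((r : Qb)), 0, by simp, ?_⟩
    have h1 : iT (Polynomial.C ((r : Qb))) = (r : TL) := by
      rw [Polynomial.C_eq_intCast]
      exact map_intCast iT r
    have h2 : cA (C r) = (r : TL) := by
      rw [show (C r : A) = ((r : A)) from (eq_intCast (C : ℤ →+* A) r)]
      exact map_intCast cA r
    rw [h1, h2, pow_zero, mul_one]
  | add f g hf hg =>
    obtain ⟨b1, m1, hd1, he1⟩ := hf
    obtain ⟨b2, m2, hd2, he2⟩ := hg
    refine ⟨b1 * Polynomial.X ^ m2 + b2 * Polynomial.X ^ m1, m1 + m2, ?_, ?_⟩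
    · refine le_trans (Polynomial.natDegree_add_le _ _) (max_le ?_ ?_)
      · exact le_trans (Polynomial.natDegree_mul_le)
          (by simp [Polynomial.natDegree_X_pow]; omega)
      · exact le_trans (Polynomial.natDegree_mul_le)
          (by simp [Polynomial.natDegree_X_pow]; omega)
    · rw [map_add, map_mul, map_mul, map_pow, map_pow, ← ZU_val, he1, he2, map_add]
      ring
  | mul_X f v hf =>
    obtain ⟨b, m, hd, he⟩ := hf
    have hmul : cA (f * X v) = cA f * cAval v := by rw [map_mul, cA_X]
    rcases vcases v with hv | hv | hv | hv <;> subst hv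
    · refine ⟨0, m, by simp, ?_⟩
      rw [map_zero, hmul, show cAval (0,0) = 0 from rfl]
      ring
    · refine ⟨-b, m, by simpa using hd, ?_⟩
      rw [map_neg iT b, hmul, show cAval (0,1) = -1 from rfl, he]
      ring
    · refine ⟨b, m, hd, ?_⟩
      rw [hmul, show cAval (1,0) = 1 from rfl, he]
      ring
    · refine ⟨b, m + 1, le_trans hd (Nat.le_succ m), ?_⟩
      rw [hmul, show cAval (1,1) = ((ZU⁻¹ : TLˣ) : TL) from rfl, he, pow_succ]
      linear_combination -(cA f * (ZU : TL) ^ m) * ZU.inv_mul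

-- injectivity of EA via the fraction field of R
abbrev K : Type := FractionRing R
def κ : A →+* K := (algebraMap R K).comp (algebraMap A R)
lemma κ_inj : Function.Injective κ := by
  have h : ⇑κ = ⇑(algebraMap R K) ∘ ⇑(algebraMap A R) := rfl
  rw [h]
  exact Function.Injective.comp (IsFractionRing.injective R K)
    (IsLocalization.injective (M := Submonoid.powers Dpoly) R
      (powers_le_nonZeroDivisors_of_noZeroDivisors hD0))

lemma κX_ne (i j : Fin 2) : κ (Xv i j) ≠ 0 := by
  intro h
  have h2 : κ (Xv i j) = κ 0 := by rw [h, map_zero]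
  exact X_ne_zero (i, j) (κ_inj h2)

lemma κD_ne : κ Dpoly ≠ 0 := by
  intro h
  have h2 : κ Dpoly = κ 0 := by rw [h, map_zero]
  exact hD0 (κ_inj h2)

def g0 : P3 →+* K := (aeval
  ![κ Dpoly * (κ (Xv 1 1))⁻¹, κ (Xv 1 1), κ (Xv 0 1)] : P3 →ₐ[ℤ] K).toRingHom

lemma g0w3 : IsUnit (g0 w3) := by
  have h : g0 w3 = κ Dpoly := by
    simp only [g0, w3, AlgHom.toRingHom_eq_coe, RingHom.coe_coe, map_mul, aeval_X]
    show κ Dpoly * (κ (Xv 1 1))⁻¹ * κ (Xv 1 1) = κ Dpoly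
    rw [mul_assoc, inv_mul_cancel₀ (κX_ne 1 1), mul_one]
  rw [h]
  exact isUnit_iff_ne_zero.mpr κD_ne

def gK : Qb →+* K := Localization.awayLift g0 w3 g0w3
lemma gK_alg (x : P3) : gK (algebraMap P3 Qb x) = g0 x := IsLocalization.Away.lift_eq _ g0w3 x

def hK : PQ →+* K := Polynomial.eval₂RingHom gK (κ (Xv 1 0) * (κ (Xv 1 1))⁻¹)

lemma hK_C (x : Qb) : hK (Polynomial.C x) = gK x := by simp [hK]
lemma hK_X : hK Polynomial.X = κ (Xv 1 0) * (κ (Xv 1 1))⁻¹ := by simp [hK]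

lemma hK_EA : hK.comp EA = κ := by
  have hg1 : gK t1Q = κ Dpoly * (κ (Xv 1 1))⁻¹ := by rw [t1Q, gK_alg]; simp [g0]
  have hg2 : gK t2Q = κ (Xv 1 1) := by rw [t2Q, gK_alg]; simp [g0]
  have hgu : gK uQ = κ (Xv 0 1) := by rw [uQ, gK_alg]; simp [g0]
  have hD : κ Dpoly = κ (Xv 0 0) * κ (Xv 1 1) - κ (Xv 0 1) * κ (Xv 1 0) := by
    simp only [Dpoly, map_sub, map_mul]
  apply MvPolynomial.ringHom_ext
  · intro r
    exact RingHom.congr_fun (RingHom.ext_int ((hK.comp EA).comp (C : ℤ →+* A))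
      (κ.comp (C : ℤ →+* A))) r
  · intro v
    rcases vcases v with hv | hv | hv | hv <;> subst hv <;>
      rw [RingHom.comp_apply, EA_X]
    · rw [show EAval (0,0) = Polynomial.C t1Q + Polynomial.C uQ * Polynomial.X from rfl,
        map_add, map_mul, hK_C, hK_C, hK_X, hg1, hgu, hD]
      show _ = κ (Xv 0 0)
      field_simp [κX_ne 1 1]
      ring
    · rw [show EAval (0,1) = Polynomial.C uQ from rfl, hK_C, hgu]
      rfl
    · rw [show EAval (1,0) = Polynomial.C t2Q * Polynomial.X from rfl,
        map_mul, hK_C, hK_X, hg2]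
      show _ = κ (Xv 1 0)
      field_simp [κX_ne 1 1]
    · rw [show EAval (1,1) = Polynomial.C t2Q from rfl, hK_C, hg2]
      rfl

lemma EA_inj : Function.Injective EA := by
  intro x y h
  apply κ_inj
  rw [← RingHom.congr_fun hK_EA x, ← RingHom.congr_fun hK_EA y]
  simp only [RingHom.coe_comp, Function.comp_apply, h]

lemma tri_mul (U V W : TLˣ) (a b c a' b' c' : ℤ) :
    (U^a * V^b * W^c) * (U^a' * V^b' * W^c') = U^(a+a') * V^(b+b') * W^(c+c') := by
  rw [zpow_add, zpow_add, zpow_add]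
  rw [mul_mul_mul_comm (U^a * V^b) (W^c) (U^a' * V^b') (W^c'),
    mul_mul_mul_comm (U^a) (V^b) (U^a') (V^b')]


theorem stmt_8 (β : R →+* S)
    (hβ : ∀ a : A, β (algebraMap A R a) = aeval substVal a)
    (u1 u2 : Sˣ) (hu1 : (u1 : S) = t1) (hu2 : (u2 : S) = t2)
    (p q : ℤ) (hpq : q < p) (f : R)
    (hf : β f = ((u1 ^ p * u2 ^ q : Sˣ) : S) * algebraMap R S f) :
    f = 0 := by
  -- map the functional equation through ν
  have hνβ : ν (β f) = iT (E f) := RingHom.congr_fun (key_comp β hβ) f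
  have hU1map : Units.map (ν : S →+* TL).toMonoidHom u1 = U1 * ZU⁻¹ := by
    apply Units.ext
    rw [Units.coe_map]
    show ν (u1 : S) = _
    rw [hu1, ν_t1, Units.val_mul]
  have hU2map : Units.map (ν : S →+* TL).toMonoidHom u2 = U2 * ZU := by
    apply Units.ext
    rw [Units.coe_map]
    show ν (u2 : S) = _
    rw [hu2, ν_t2, Units.val_mul]
  have hrel : iT (E f) = (((U1 * ZU⁻¹)^p * (U2 * ZU)^q : TLˣ) : TL) * cR f := by
    rw [← hνβ, hf, map_mul, ν_alg]
    congr 1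
    have hcoe : ν ((u1^p*u2^q : Sˣ) : S)
        = ((Units.map (ν : S →+* TL).toMonoidHom (u1^p*u2^q) : TLˣ) : TL) := rfl
    rw [hcoe, map_mul, map_zpow, map_zpow, hU1map, hU2map]
  -- representation of f as a / D^k
  obtain ⟨⟨a, s⟩, hfs⟩ := IsLocalization.surj (M := Submonoid.powers Dpoly) (S := R) f
  obtain ⟨k, hk⟩ := s.2
  have hk' : Dpoly ^ k = (s : A) := hk
  rw [← hk'] at hfs
  -- map through E and cR
  have hE : E f * Polynomial.C ((t1Q * t2Q)^k) = EA a := by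
    have h := congrArg E hfs
    rw [map_mul, E_alg, E_alg, map_pow, hEAD, ← map_pow] at h
    exact h
  have hcR : cR f = cA a := by
    have h := congrArg cR hfs
    rw [map_mul, cR_alg, cR_alg, map_pow, hcAD, one_pow, mul_one] at h
    exact h
  obtain ⟨b, m, hdb, hb⟩ := cA_rep a
  -- integers bookkeeping
  set N : ℕ := p.natAbs + q.natAbs + k with hN
  set dn : ℕ := (p - q).toNat with hdn'
  have hdn : (dn : ℤ) = p - q := by omega
  have hdn1 : 1 ≤ dn := by omega
  set e1 : ℕ := (p + k + N).toNat with he1'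
  set e2 : ℕ := (q + k + N).toNat with he2'
  have he1 : (e1 : ℤ) = p + k + N := by omega
  have he2 : (e2 : ℤ) = q + k + N := by omega
  -- the unit identity
  have UI : ((U1 * ZU⁻¹)^p * (U2 * ZU)^q : TLˣ) * (U1*U2)^k * (ZU^m)⁻¹ *
      (U1^N * U2^N * ZU^(m+dn)) = U1^e1 * U2^e2 := by
    have h1 : (U1 * ZU⁻¹)^p = U1^p * U2^(0:ℤ) * ZU^(-p) := by
      rw [mul_zpow, inv_zpow', zpow_zero, mul_one]
    have h2 : (U2 * ZU)^q = U1^(0:ℤ) * U2^q * ZU^q := by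
      rw [mul_zpow, zpow_zero, one_mul]
    have h3 : ((U1*U2)^k : TLˣ) = U1^(k:ℤ) * U2^(k:ℤ) * ZU^(0:ℤ) := by
      rw [mul_pow, ← zpow_natCast U1 k, ← zpow_natCast U2 k, zpow_zero, mul_one]
    have h4 : ((ZU^m)⁻¹ : TLˣ) = U1^(0:ℤ) * U2^(0:ℤ) * ZU^(-(m:ℤ)) := by
      rw [zpow_zero, zpow_zero, one_mul, one_mul, ← zpow_natCast ZU m, ← zpow_neg]
    have h5 : (U1^N * U2^N * ZU^(m+dn) : TLˣ)
        = U1^((N:ℤ)) * U2^((N:ℤ)) * ZU^(((m+dn : ℕ) : ℤ)) := by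
      rw [zpow_natCast, zpow_natCast, zpow_natCast]
    have h6 : (U1^e1 * U2^e2 : TLˣ) = U1^((e1:ℤ)) * U2^((e2:ℤ)) * ZU^(0:ℤ) := by
      rw [zpow_natCast, zpow_natCast, zpow_zero, mul_one]
    rw [h1, h2, h3, h4, h5, h6, tri_mul, tri_mul, tri_mul, tri_mul]
    congr 1
    · congr 1
      · congr 1
        omega
      · congr 1
        omega
    · congr 1
      omega
  -- the main polynomial identity
  have hCk : iT (Polynomial.C ((t1Q * t2Q)^k)) = (((U1*U2)^k : TLˣ) : TL) := by
    have : iT (Polynomial.C ((t1Q * t2Q)^k)) = (jQ (t1Q * t2Q))^k := by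
      rw [← map_pow jQ]; rfl
    rw [this, map_mul]
    simp [U1_val, U2_val]
  have hcAa : cA a = iT b * (((ZU^m)⁻¹ : TLˣ) : TL) := by
    rw [hb]
    have : (((ZU : TLˣ)^m : TLˣ) : TL) = (ZU : TL)^m := by simp
    rw [← this, Units.mul_inv_cancel_right]
  have hME : iT (EA a) = ((((U1 * ZU⁻¹)^p * (U2 * ZU)^q : TLˣ) * (U1*U2)^k * (ZU^m)⁻¹ : TLˣ) : TL) * iT b := by
    rw [← hE, map_mul, hrel, hcR, hcAa, hCk]
    simp only [Units.val_mul]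
    ring
  have hPL : iT (EA a * Polynomial.C (t1Q^N * t2Q^N) * Polynomial.X^(m+dn))
      = iT (Polynomial.C (t1Q^e1 * t2Q^e2) * b) := by
    have hvC : iT (Polynomial.C (t1Q^N * t2Q^N)) = ((U1 : TL))^N * ((U2 : TL))^N := by
      have h : iT (Polynomial.C (t1Q^N * t2Q^N)) = jQ (t1Q^N * t2Q^N) := rfl
      rw [h, map_mul, map_pow, map_pow]
      simp [U1_val, U2_val]
    have hvX : iT ((Polynomial.X : PQ) ^ (m+dn)) = ((ZU : TL))^(m+dn) := by
      simp [map_pow, ZU_val]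
    have hv2 : iT (Polynomial.C (t1Q^e1 * t2Q^e2)) = ((U1^e1 * U2^e2 : TLˣ) : TL) := by
      have h : iT (Polynomial.C (t1Q^e1 * t2Q^e2)) = jQ (t1Q^e1 * t2Q^e2) := rfl
      rw [h, map_mul, map_pow, map_pow]
      simp [U1_val, U2_val]
    rw [map_mul, map_mul, hME, hvC, hvX, map_mul, hv2, ← UI]
    simp only [Units.val_mul, Units.val_pow_eq_pow_val]
    ring
  have hpoly := iT_inj hPL
  -- degree contradiction unless a = 0
  have ha : a = 0 := by
    by_contra ha
    have hEAa : EA a ≠ 0 := fun h => ha (EA_inj (by rw [h, map_zero]))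
    have ht1N : (t1Q^N * t2Q^N : Qb) ≠ 0 := ((hUt1.pow N).mul (hUt2.pow N)).ne_zero
    have ht1e : (t1Q^e1 * t2Q^e2 : Qb) ≠ 0 := ((hUt1.pow e1).mul (hUt2.pow e2)).ne_zero
    have hC1 : (Polynomial.C (t1Q^N * t2Q^N) : PQ) ≠ 0 := by
      simpa using ht1N
    have hXp : (Polynomial.X^(m+dn) : PQ) ≠ 0 := pow_ne_zero _ Polynomial.X_ne_zero
    have hPLne : EA a * Polynomial.C (t1Q^N * t2Q^N) * Polynomial.X^(m+dn) ≠ 0 :=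
      mul_ne_zero (mul_ne_zero hEAa hC1) hXp
    have hbne : b ≠ 0 := by
      intro hb0
      rw [hb0, mul_zero] at hpoly
      exact hPLne hpoly
    have hdegL : (EA a * Polynomial.C (t1Q^N * t2Q^N) * Polynomial.X^(m+dn)).natDegree
        = (EA a).natDegree + (m + dn) := by
      rw [Polynomial.natDegree_mul (mul_ne_zero hEAa hC1) hXp,
        Polynomial.natDegree_mul hEAa hC1, Polynomial.natDegree_C,
        Polynomial.natDegree_X_pow, add_zero]
    have hdegR : (Polynomial.C (t1Q^e1 * t2Q^e2) * b).natDegree = b.natDegree := by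
      rw [Polynomial.natDegree_mul (by simpa using ht1e) hbne, Polynomial.natDegree_C,
        zero_add]
    rw [hpoly, hdegR] at hdegL
    omega
  -- conclude
  rw [ha, map_zero] at hfs
  have hunit : IsUnit (algebraMap A R (Dpoly ^ k)) := by
    rw [map_pow]
    exact (IsLocalization.Away.algebraMap_isUnit (S := R) Dpoly).pow k
  exact (hunit.mul_left_eq_zero).mp hfs
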